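/- In the Robinson–Schensted correspondence between involutions of [n] and standard Young tableaux of n cells, the subtableau on the letters 1,…,k of the tableau corresponding to an involution φ depends only on the relative order in which the letters 1,…,k appear in the value sequence of φ: if two involutions φ of [n] and ψ of [m] are such that deleting all values greater than k from the value sequences φ(1),…,φ(n) and ψ(1),…,ψ(m) yields the same word, then the subtableaux on the letters 1,…,k of their Robinson–Schensted tableaux are equal. -/

import Mathlib

/-- Schensted row insertion of `x` into a single row: returns the new row together with
the bumped entry (if any).  `x` replaces the leftmost entry strictly larger than it. -/
def insertRow (x : ℕ) : List ℕ → List ℕ × Option ℕ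
  | [] => ([x], none)
  | a :: as =>
    if x < a then (x :: as, some a)
    else
      let p := insertRow x as
      (a :: p.1, p.2)

/-- Schensted insertion of `x` into a tableau (given as its list of rows). -/
def insertTableau (x : ℕ) : List (List ℕ) → List (List ℕ)
  | [] => [[x]]
  | r :: rs =>
    match insertRow x r with
    | (r', none) => r' :: rs
    | (r', some b) => r' :: insertTableau b rs

/-- The Robinson–Schensted `P`-tableau of a word, obtained by successive row insertion. -/
def RS (w : List ℕ) : List (List ℕ) :=
  w.foldl (fun t x => insertTableau x t) []

/-- The subtableau of a tableau on the letters `1,…,k`: keep only the entries `≤ k`. -/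
def subtableau (k : ℕ) (t : List (List ℕ)) : List (List ℕ) :=
  (t.map fun r => r.filter fun a => decide (a ≤ k)).filter fun r => decide (r ≠ [])

/-- Tableau invariant: rows nonempty, rows weakly increasing, all entries of
lower rows exceed the head of the current row. -/
def TInv : List (List ℕ) → Prop
  | [] => True
  | r :: rs => r ≠ [] ∧ List.Chain' (· ≤ ·) r ∧ (∀ q ∈ rs, ∀ y ∈ q, r.headI < y) ∧ TInv rs

lemma insertRow_cases (x : ℕ) (r : List ℕ) :
    (insertRow x r = (r ++ [x], none) ∧ ∀ y ∈ r, y ≤ x) ∨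
    ∃ a p s, insertRow x r = (p ++ x :: s, some a) ∧
      r = p ++ a :: s ∧ (∀ y ∈ p, y ≤ x) ∧ x < a := by
  induction r with
  | nil => left; exact ⟨rfl, by simp⟩
  | cons b bs ih =>
    by_cases hxb : x < b
    · right
      exact ⟨b, [], bs, by simp [insertRow, hxb], rfl, by simp, hxb⟩
    · have hbx : b ≤ x := Nat.le_of_not_lt hxb
      rcases ih with ⟨h1, h2⟩ | ⟨a, p, s, h1, h2, h3, h4⟩
      · left
        constructor
        · simp [insertRow, hxb, h1]
        · intro y hy
          rcases List.mem_cons.mp hy with rfl | hy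
          · exact hbx
          · exact h2 y hy
      · right
        refine ⟨a, b :: p, s, ?_, by simp [h2], ?_, h4⟩
        · simp [insertRow, hxb, h1]
        · intro y hy
          rcases List.mem_cons.mp hy with rfl | hy
          · exact hbx
          · exact h3 y hy

lemma subtableau_nil (k : ℕ) : subtableau k [] = [] := rfl

lemma subtableau_cons (k : ℕ) (r : List ℕ) (t : List (List ℕ)) :
    subtableau k (r :: t) =
      if (r.filter fun a => decide (a ≤ k)) = [] then subtableau k t
      else (r.filter fun a => decide (a ≤ k)) :: subtableau k t := by
  simp only [subtableau, List.map_cons, List.filter_cons]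
  split <;> rename_i h
  · rw [if_neg]; simp_all
  · rw [if_pos]; simp_all

lemma chain'_head_le {l : List ℕ} (h : List.Chain' (· ≤ ·) l) : ∀ y ∈ l, l.headI ≤ y := by
  cases l with
  | nil => simp
  | cons a l =>
    intro y hy
    rcases List.mem_cons.mp hy with rfl | hy
    · simp
    · have := (List.isChain_iff_pairwise.mp h)
      exact (List.pairwise_cons.mp this).1 y hy

/-- Lemma A: inserting a letter `> k` does not change the subtableau. -/
lemma subtableau_insert_gt (k : ℕ) :
    ∀ (t : List (List ℕ)) (x : ℕ), k < x →
      subtableau k (insertTableau x t) = subtableau k t := by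
  intro t
  induction t with
  | nil =>
    intro x hx
    have hfx : ¬ (x ≤ k) := Nat.not_le.mpr hx
    simp [insertTableau, subtableau, hfx]
  | cons r rs ih =>
    intro x hx
    have hfx : ¬ (x ≤ k) := Nat.not_le.mpr hx
    rcases insertRow_cases x r with ⟨h1, h2⟩ | ⟨a, p, s, h1, h2, h3, h4⟩
    · have hIT : insertTableau x (r :: rs) = (r ++ [x]) :: rs := by
        simp [insertTableau, h1]
      rw [hIT, subtableau_cons, subtableau_cons]
      simp [List.filter_append, hfx]
    · have hIT : insertTableau x (r :: rs) = (p ++ x :: s) :: insertTableau a rs := by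
        simp [insertTableau, h1]
      have hfa : ¬ (a ≤ k) := Nat.not_le.mpr (lt_trans hx h4)
      rw [hIT, subtableau_cons, subtableau_cons, ih a (lt_trans hx h4), h2]
      simp [List.filter_append, List.filter_cons, hfx, hfa]

lemma insertTableau_entries :
    ∀ (t : List (List ℕ)) (x : ℕ) (q : List ℕ), q ∈ insertTableau x t →
      ∀ y ∈ q, y = x ∨ ∃ q' ∈ t, y ∈ q' := by
  intro t
  induction t with
  | nil =>
    intro x q hq y hy
    simp [insertTableau] at hq
    subst hq
    simp at hy
    exact Or.inl hy
  | cons r rs ih =>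
    intro x q hq y hy
    rcases insertRow_cases x r with ⟨h1, h2⟩ | ⟨a, p, s, h1, h2, h3, h4⟩
    · rw [show insertTableau x (r :: rs) = (r ++ [x]) :: rs by simp [insertTableau, h1]] at hq
      rcases List.mem_cons.mp hq with rfl | hq
      · rcases List.mem_append.mp hy with hy | hy
        · exact Or.inr ⟨r, by simp, hy⟩
        · simp at hy; exact Or.inl hy
      · exact Or.inr ⟨q, by simp [hq], hy⟩
    · rw [show insertTableau x (r :: rs) = (p ++ x :: s) :: insertTableau a rs
          by simp [insertTableau, h1]] at hq
      rcases List.mem_cons.mp hq with rfl | hq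
      · rcases List.mem_append.mp hy with hy | hy
        · exact Or.inr ⟨r, by simp, by simp [h2, hy]⟩
        · rcases List.mem_cons.mp hy with rfl | hy
          · exact Or.inl rfl
          · exact Or.inr ⟨r, by simp, by simp [h2, hy]⟩
      · rcases ih a q hq y hy with rfl | ⟨q', hq', hyq'⟩
        · exact Or.inr ⟨r, by simp, by simp [h2]⟩
        · exact Or.inr ⟨q', by simp [hq'], hyq'⟩

lemma TInv_insert : ∀ (t : List (List ℕ)) (x : ℕ), TInv t → TInv (insertTableau x t) := by
  intro t
  induction t with
  | nil => intro x _; exact ⟨by simp, List.isChain_singleton x, by simp, trivial⟩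
  | cons r rs ih =>
    intro x hInv
    obtain ⟨hne, hch, hdom, hrs⟩ := hInv
    rcases insertRow_cases x r with ⟨h1, h2⟩ | ⟨a, p, s, h1, h2, h3, h4⟩
    · rw [show insertTableau x (r :: rs) = (r ++ [x]) :: rs by simp [insertTableau, h1]]
      refine ⟨by simp, ?_, ?_, hrs⟩
      · rw [show List.Chain' _ _ ↔ List.IsChain _ _ from Iff.rfl, List.isChain_append]
        refine ⟨hch, List.isChain_singleton x, ?_⟩
        intro c hc d hd
        simp at hd; subst hd
        exact h2 c (List.mem_of_mem_getLast? hc)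
      · intro q hq y hy
        have : (r ++ [x]).headI = r.headI := by
          cases r with
          | nil => exact absurd rfl hne
          | cons _ _ => rfl
        rw [this]
        exact hdom q hq y hy
    · rw [show insertTableau x (r :: rs) = (p ++ x :: s) :: insertTableau a rs
          by simp [insertTableau, h1]]
      subst h2
      have hchp : List.Chain' (· ≤ ·) p ∧ List.Chain' (· ≤ ·) (a :: s) ∧
          ∀ c ∈ p.getLast?, ∀ d ∈ (a :: s).head?, c ≤ d := List.isChain_append.mp hch
      have hhead' : (p ++ x :: s).headI ≤ x := by
        cases p with
        | nil => simp
        | cons b bs => simpa using h3 b (by simp)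
      have hheadle : (p ++ x :: s).headI ≤ (p ++ a :: s).headI := by
        cases p with
        | nil => simpa using Nat.le_of_lt h4
        | cons b bs => simp
      refine ⟨by simp, ?_, ?_, ih a hrs⟩
      · rw [show List.Chain' _ _ ↔ List.IsChain _ _ from Iff.rfl, List.isChain_append]
        refine ⟨hchp.1, ?_, ?_⟩
        · rw [List.isChain_cons]
          refine ⟨?_, (List.isChain_cons.mp hchp.2.1).2⟩
          intro d hd
          have := (List.isChain_cons.mp hchp.2.1).1 d hd
          exact le_trans (Nat.le_of_lt h4) this
        · intro c hc d hd
          simp at hd; subst hd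
          exact h3 c (List.mem_of_mem_getLast? hc)
      · intro q hq y hy
        rcases insertTableau_entries rs a q hq y hy with rfl | ⟨q', hq', hyq'⟩
        · exact lt_of_le_of_lt hhead' h4
        · exact lt_of_le_of_lt hheadle (hdom q' hq' y hyq')

lemma Inv_entries_gt_head {r : List ℕ} {rs : List (List ℕ)} (h : TInv (r :: rs)) :
    ∀ q ∈ rs, ∀ y ∈ q, r.headI < y := h.2.2.1

lemma insertRow_all_le {x : ℕ} {r : List ℕ} (h : ∀ y ∈ r, y ≤ x) :
    insertRow x r = (r ++ [x], none) := by
  induction r with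
  | nil => rfl
  | cons a as ihr =>
    have ha : ¬ x < a := Nat.not_lt.mpr (h a (by simp))
    simp [insertRow, ha, ihr (fun y hy => h y (by simp [hy]))]

lemma insertRow_bump {x a : ℕ} (p s : List ℕ) (hp : ∀ y ∈ p, y ≤ x) (hxa : x < a) :
    insertRow x (p ++ a :: s) = (p ++ x :: s, some a) := by
  induction p with
  | nil => simp [insertRow, hxa]
  | cons b bs ihp =>
    have hb : ¬ x < b := Nat.not_lt.mpr (hp b (by simp))
    simp [insertRow, hb, ihp (fun y hy => hp y (by simp [hy]))]

/-- Lemma B: inserting a letter `≤ k` commutes with taking the subtableau. -/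
lemma subtableau_insert_le (k : ℕ) :
    ∀ (t : List (List ℕ)) (x : ℕ), x ≤ k → TInv t →
      subtableau k (insertTableau x t) = insertTableau x (subtableau k t) := by
  intro t
  induction t with
  | nil =>
    intro x hx _
    simp [insertTableau, subtableau, hx]
  | cons r rs ih =>
    intro x hx hInv
    obtain ⟨hne, hch, hdom, hrs⟩ := hInv
    rcases insertRow_cases x r with ⟨h1, h2⟩ | ⟨a, p, s, h1, h2, h3, h4⟩
    · -- appended at end of first row; all entries of r are ≤ x ≤ k
      have hfr : r.filter (fun a => decide (a ≤ k)) = r :=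
        List.filter_eq_self.mpr (fun y hy => by simpa using le_trans (h2 y hy) hx)
      rw [show insertTableau x (r :: rs) = (r ++ [x]) :: rs by simp [insertTableau, h1]]
      rw [subtableau_cons, subtableau_cons]
      have hfr' : (r ++ [x]).filter (fun a => decide (a ≤ k)) = r ++ [x] := by
        rw [List.filter_append, hfr]; simp [hx]
      rw [hfr', hfr, if_neg (by simp), if_neg hne]
      rw [show insertTableau x (r :: subtableau k rs) = (r ++ [x]) :: subtableau k rs
          by simp [insertTableau, insertRow_all_le h2]]
    · subst h2
      have hfp : p.filter (fun a => decide (a ≤ k)) = p :=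
        List.filter_eq_self.mpr (fun y hy => by simpa using le_trans (h3 y hy) hx)
      by_cases hak : a ≤ k
      · -- bumped entry is ≤ k : it gets bumped in the subtableau too
        have hf1 : (p ++ x :: s).filter (fun a => decide (a ≤ k))
            = p ++ x :: s.filter (fun a => decide (a ≤ k)) := by
          simp [List.filter_append, List.filter_cons, hx, hfp]
        have hf2 : ((p ++ a :: s).filter fun a => decide (a ≤ k))
            = p ++ a :: s.filter (fun a => decide (a ≤ k)) := by
          simp [List.filter_append, List.filter_cons, hak, hfp]
        rw [show insertTableau x ((p ++ a :: s) :: rs) =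
              (p ++ x :: s) :: insertTableau a rs by simp [insertTableau, h1]]
        rw [subtableau_cons, subtableau_cons, hf1, hf2,
          if_neg (by simp), if_neg (by simp)]
        rw [show insertTableau x ((p ++ a :: s.filter fun a => decide (a ≤ k)) ::
              subtableau k rs) =
            (p ++ x :: s.filter fun a => decide (a ≤ k)) ::
              insertTableau a (subtableau k rs)
          by simp [insertTableau, insertRow_bump p _ h3 h4]]
        rw [ih a hak hrs]
      · -- bumped entry is > k : everything in s and below is > k
        have hka : k < a := Nat.not_le.mp hak
        have hchas : List.Chain' (· ≤ ·) (a :: s) := (List.isChain_append.mp hch).2.1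
        have hfs : s.filter (fun a => decide (a ≤ k)) = [] := by
          rw [List.filter_eq_nil_iff]
          intro y hy
          have : a ≤ y := chain'_head_le hchas y (by simp [hy])
          simp; omega
        have hf1 : (p ++ x :: s).filter (fun a => decide (a ≤ k)) = p ++ [x] := by
          simp [List.filter_append, List.filter_cons, hx, hfp, hfs]
        have hf2 : ((p ++ a :: s).filter fun a => decide (a ≤ k)) = p := by
          simp [List.filter_append, List.filter_cons, hak, hfp, hfs]
        rw [show insertTableau x ((p ++ a :: s) :: rs) =
              (p ++ x :: s) :: insertTableau a rs by simp [insertTableau, h1]]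
        rw [subtableau_cons, subtableau_cons, hf1, hf2,
          subtableau_insert_gt k rs a hka, if_neg (by simp)]
        cases p with
        | cons b bs =>
          rw [if_neg (by simp)]
          rw [show insertTableau x ((b :: bs) :: subtableau k rs) =
              ((b :: bs) ++ [x]) :: subtableau k rs
            by simp [insertTableau, insertRow_all_le h3]]
        | nil =>
          rw [if_pos rfl]
          -- subtableau k rs = [] because all entries of rs exceed a > k
          have hsub : subtableau k rs = [] := by
            have hall : ∀ q ∈ rs, q.filter (fun a => decide (a ≤ k)) = [] := by
              intro q hq
              rw [List.filter_eq_nil_iff]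
              intro y hy
              have := hdom q hq y hy
              simp only [List.nil_append, List.headI] at this
              simp; omega
            simp only [subtableau, List.filter_eq_nil_iff]
            intro q hq
            simp only [List.mem_map] at hq
            obtain ⟨q', hq', rfl⟩ := hq
            simp [hall q' hq']
          rw [hsub]
          simp [insertTableau]

lemma RS_aux (k : ℕ) :
    ∀ (w : List ℕ) (t : List (List ℕ)), TInv t →
      subtableau k (w.foldl (fun t x => insertTableau x t) t) =
      (w.filter fun a => decide (a ≤ k)).foldl
        (fun t x => insertTableau x t) (subtableau k t) := by
  intro w
  induction w with
  | nil => intro t _; rfl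
  | cons x w ihw =>
    intro t hInv
    by_cases hx : x ≤ k
    · rw [List.foldl_cons, List.filter_cons, if_pos (by simp [hx]), List.foldl_cons,
        ← subtableau_insert_le k t x hx hInv]
      exact ihw _ (TInv_insert t x hInv)
    · rw [List.foldl_cons, List.filter_cons, if_neg (by simp [hx]),
        ← subtableau_insert_gt k t x (Nat.not_le.mp hx)]
      exact ihw _ (TInv_insert t x hInv)

lemma subtableau_RS (k : ℕ) (w : List ℕ) :
    subtableau k (RS w) = RS (w.filter fun a => decide (a ≤ k)) := by
  have := RS_aux k w [] trivial
  simpa [RS, subtableau_nil] using this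

/-- The value sequence `φ(1), φ(2), …, φ(n)` of a permutation of `[n]`
(written with the letters `1,…,n`). -/
def valueSeq {n : ℕ} (φ : Equiv.Perm (Fin n)) : List ℕ :=
  List.ofFn fun i => (φ i : ℕ) + 1

/-- In the Robinson–Schensted correspondence between involutions and
standard Young tableaux, the subtableau on the letters `1,…,k` of the tableau of an
involution depends only on the relative order of the letters `1,…,k` in its value
sequence: if deleting all values greater than `k` from the value sequences of two
involutions yields the same word, then the corresponding subtableaux agree. -/
theorem rs_subtableau_depends_only_on_order (n m k : ℕ)
    (φ : Equiv.Perm (Fin n)) (ψ : Equiv.Perm (Fin m))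
    (hφ : φ * φ = 1) (hψ : ψ * ψ = 1)
    (h : (valueSeq φ).filter (fun a => decide (a ≤ k)) =
         (valueSeq ψ).filter (fun a => decide (a ≤ k))) :
    subtableau k (RS (valueSeq φ)) = subtableau k (RS (valueSeq ψ)) := by
  rw [show valueSeq φ = (List.ofFn fun i => ((φ i : ℕ) + 1)) from rfl,
    show valueSeq ψ = (List.ofFn fun i => ((ψ i : ℕ) + 1)) from rfl] at h ⊢
  rw [subtableau_RS, subtableau_RS, h]
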